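/- Let {S_θ : θ ∈ Θ} be an e-collection for a family of probability measures {P_θ : θ ∈ Θ} on 𝒴 (each S_θ : 𝒴 → [0,∞) measurable with ∫ S_θ dP_θ ≤ 1), let L : Θ × 𝒜 → ℝ satisfy the no-sure-gain condition sup_{θ∈Θ} L(θ,a) ≥ 0 for all a, and let δ : 𝒴 → 𝒜 be any decision rule. Define the capped e-posterior P̂(θ|y) := min{1, 1/S_θ(y)} (with 1/0 := ∞) and the capped risk assessment R̂(y) := sup_{θ∈Θ} P̂(θ|y)·L(θ,δ(y)). Then the quantity 2·R̂ is a valid risk bound in the sense of Proposition 1: for every θ ∈ Θ, E_{Y∼P_θ}[ L(θ,δ(Y)) / (2 R̂(Y)) ] ≤ 1, with the conventions c/∞ := 0, c/0 := 0 for c ≤ 0, and assuming the integrand is measurable. -/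

import Mathlib

open MeasureTheory ENNReal

/-- Proposition 2: twice the capped e-posterior risk assessment is a valid risk bound.
With the capped e-posterior `P̂(θ ∣ y) = min {1, 1 / S θ y}` and
`R̂ y = ⨆ θ, P̂(θ ∣ y) * L(θ, δ y)`, for every `θ`:
`E_{P θ}[ L(θ, δ Y) / (2 * R̂ Y) ] ≤ 1`. -/
theorem capped_e_posterior_risk_bound_valid
    {Θ 𝒴 𝒜 : Type*} [Nonempty Θ] [MeasurableSpace 𝒴]
    (P : Θ → Measure 𝒴) [∀ θ, IsProbabilityMeasure (P θ)]
    -- the e-collection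
    (S : Θ → 𝒴 → ℝ)
    (hS_nonneg : ∀ θ y, 0 ≤ S θ y)
    (hS_meas : ∀ θ, Measurable (S θ))
    (hS_e : ∀ θ, ∫⁻ y, ENNReal.ofReal (S θ y) ∂(P θ) ≤ 1)
    -- the loss function satisfying the no-sure-gain condition
    (L : Θ × 𝒜 → ℝ)
    (hL_nsg : ∀ a : 𝒜, (0 : EReal) ≤ ⨆ θ : Θ, (L (θ, a) : EReal))
    -- the decision rule
    (δ : 𝒴 → 𝒜)
    -- the capped e-posterior `P̂(θ ∣ y) = min {1, 1 / S θ y}` (with `1/0 = ∞`)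
    (Phat : Θ → 𝒴 → ℝ≥0∞)
    (hPhat : ∀ θ y, Phat θ y = min 1 (ENNReal.ofReal (S θ y))⁻¹)
    -- the capped risk assessment `R̂ y = ⨆ θ, P̂(θ ∣ y) * L(θ, δ y)`
    (Rhat : 𝒴 → ℝ≥0∞)
    (hRhat : ∀ y, Rhat y = ⨆ θ : Θ, Phat θ y * ENNReal.ofReal (L (θ, δ y)))
    -- the integrand `L(θ, δ y) / (2 * R̂ y)`, with conventions `c / ∞ = 0`,
    -- `c / 0 = 0` for `c ≤ 0`
    (g : Θ → 𝒴 → ℝ)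
    (hg : ∀ θ y, g θ y =
      if (2 * Rhat y) = 0 ∨ (2 * Rhat y) = ⊤ then 0
      else L (θ, δ y) / (2 * Rhat y).toReal)
    (hg_meas : ∀ θ, Measurable (g θ)) :
    ∀ θ : Θ, ∫ y, g θ y ∂(P θ) ≤ 1 := by
  intro θ₀
  set h : 𝒴 → ℝ := fun y => (1 + S θ₀ y) / 2 with hh
  -- S θ₀ is integrable
  have hS_int : Integrable (S θ₀) (P θ₀) := by
    refine ⟨(hS_meas θ₀).aestronglyMeasurable, ?_⟩
    rw [HasFiniteIntegral]
    have : ∀ y, ‖S θ₀ y‖ₑ = ENNReal.ofReal (S θ₀ y) := by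
      intro y
      rw [← ofReal_norm, Real.norm_of_nonneg (hS_nonneg θ₀ y)]
    simp_rw [this]
    exact lt_of_le_of_lt (hS_e θ₀) one_lt_top
  have hS_integral_le : ∫ y, S θ₀ y ∂(P θ₀) ≤ 1 := by
    rw [integral_eq_lintegral_of_nonneg_ae (Filter.Eventually.of_forall (hS_nonneg θ₀))
      (hS_meas θ₀).aestronglyMeasurable]
    have := ENNReal.toReal_mono one_ne_top (hS_e θ₀)
    simpa using this
  have hh_int : Integrable h (P θ₀) := by
    have : Integrable (fun y => 1 + S θ₀ y) (P θ₀) :=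
      (integrable_const 1).add hS_int
    simpa [hh, div_eq_mul_inv] using this.mul_const (2⁻¹ : ℝ)
  have hh_nonneg : ∀ y, 0 ≤ h y := by
    intro y
    have := hS_nonneg θ₀ y
    simp only [hh]
    linarith
  have hh_integral : ∫ y, h y ∂(P θ₀) ≤ 1 := by
    have : ∫ y, h y ∂(P θ₀) = (1 + ∫ y, S θ₀ y ∂(P θ₀)) / 2 := by
      simp_rw [hh, div_eq_mul_inv]
      rw [integral_mul_const, integral_add (integrable_const 1) hS_int]
      simp [integral_const]
    rw [this]
    linarith
  -- pointwise bound g θ₀ y ≤ h y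
  have key : ∀ y, g θ₀ y ≤ h y := by
    intro y
    rw [hg]
    by_cases hc : (2 * Rhat y) = 0 ∨ (2 * Rhat y) = ⊤
    · rw [if_pos hc]; exact hh_nonneg y
    · rw [if_neg hc]
      push_neg at hc
      have hr_pos : 0 < (2 * Rhat y).toReal := ENNReal.toReal_pos hc.1 hc.2
      by_cases hL : L (θ₀, δ y) ≤ 0
      · exact le_trans (div_nonpos_iff.2 (Or.inr ⟨hL, le_of_lt hr_pos⟩)) (hh_nonneg y)
      · push_neg at hL
        set s : ℝ≥0∞ := ENNReal.ofReal (S θ₀ y) with hs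
        have hs_ne_top : s ≠ ⊤ := ofReal_ne_top
        have h1s_ne_top : (1 + s) ≠ ⊤ := by simp [hs_ne_top]
        -- Phat θ₀ y ≥ (1+s)⁻¹
        have hPhat_ge : (1 + s)⁻¹ ≤ Phat θ₀ y := by
          rw [hPhat]
          refine le_min ?_ ?_
          · exact ENNReal.inv_le_one.2 (le_add_of_nonneg_right zero_le)
          · exact ENNReal.inv_le_inv.2 (le_add_of_nonneg_left zero_le)
        have hRhat_ge : (1 + s)⁻¹ * ENNReal.ofReal (L (θ₀, δ y)) ≤ Rhat y := by
          rw [hRhat]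
          exact le_trans (mul_le_mul_left hPhat_ge _) (le_iSup (fun θ => Phat θ y * ENNReal.ofReal (L (θ, δ y))) θ₀)
        have h2R_ge : 2 * ((1 + s)⁻¹ * ENNReal.ofReal (L (θ₀, δ y))) ≤ 2 * Rhat y :=
          mul_le_mul_right hRhat_ge 2
        have htoReal : (2 * ((1 + s)⁻¹ * ENNReal.ofReal (L (θ₀, δ y)))).toReal
            = 2 * ((1 + S θ₀ y)⁻¹ * L (θ₀, δ y)) := by
          rw [ENNReal.toReal_mul, ENNReal.toReal_mul, ENNReal.toReal_inv,
            ENNReal.toReal_add one_ne_top hs_ne_top,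
            ENNReal.toReal_ofReal (le_of_lt hL), ENNReal.toReal_ofReal (hS_nonneg θ₀ y)]
          simp
        have hr_ge : 2 * ((1 + S θ₀ y)⁻¹ * L (θ₀, δ y)) ≤ (2 * Rhat y).toReal := by
          rw [← htoReal]
          exact ENNReal.toReal_mono hc.2 h2R_ge
        have h1S_pos : (0 : ℝ) < 1 + S θ₀ y := by
          have := hS_nonneg θ₀ y; linarith
        rw [div_le_iff₀ hr_pos]
        have h2 : 2 * L (θ₀, δ y) ≤ (2 * Rhat y).toReal * (1 + S θ₀ y) := by
          have := mul_le_mul_of_nonneg_right hr_ge (le_of_lt h1S_pos)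
          calc 2 * L (θ₀, δ y)
              = 2 * ((1 + S θ₀ y)⁻¹ * L (θ₀, δ y)) * (1 + S θ₀ y) := by
                field_simp
            _ ≤ (2 * Rhat y).toReal * (1 + S θ₀ y) := this
        simp only [hh]
        nlinarith
  -- assemble
  have step1 : ∫ y, g θ₀ y ∂(P θ₀) ≤ ∫ y, max (g θ₀ y) 0 ∂(P θ₀) := by
    by_cases hint : Integrable (g θ₀) (P θ₀)
    · exact integral_mono hint hint.pos_part (fun y => le_max_left _ _)
    · rw [integral_undef hint]
      exact integral_nonneg (fun y => le_max_right _ _)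
  have step2 : ∫ y, max (g θ₀ y) 0 ∂(P θ₀) ≤ ∫ y, h y ∂(P θ₀) := by
    refine integral_mono_of_nonneg (Filter.Eventually.of_forall fun y => le_max_right _ _)
      hh_int (Filter.Eventually.of_forall fun y => ?_)
    exact max_le (key y) (hh_nonneg y)
  linarith
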